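/- In the group ring Z[C*] (with basis elements ⟨α⟩ for α ∈ ℂ*), define Λ_n = div(t^n - 1) = ∑_{α^n=1} ⟨α⟩. Then for positive integers a and b, Λ_a · Λ_b = gcd(a,b) · Λ_{lcm(a,b)}. -/

import Mathlib

/-- `Λ n` : the formal sum of all `n`-th roots of unity in the group ring `ℤ[ℂˣ]`
(set to `0` in the degenerate case `n = 0`). -/
noncomputable def Lambda (n : ℕ) : MonoidAlgebra ℤ ℂˣ :=
  if h : n = 0 then 0 else
    haveI : NeZero n := ⟨h⟩
    haveI : Fintype (rootsOfUnity n ℂ) := Fintype.ofFinite _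
    ∑ ζ : rootsOfUnity n ℂ, MonoidAlgebra.single (ζ : ℂˣ) (1 : ℤ)

private lemma pow_eq_one_of_dvd' {x : ℂˣ} {m n : ℕ} (h : x ^ m = 1) (hd : m ∣ n) :
    x ^ n = 1 := by
  obtain ⟨c, rfl⟩ := hd; rw [pow_mul, h, one_pow]

private lemma exists_factor (a b : ℕ) (ha : 0 < a) (hb : 0 < b) (η : ℂˣ)
    (hη : η ^ Nat.lcm a b = 1) :
    ∃ ζ ξ : ℂˣ, ζ ^ a = 1 ∧ ξ ^ b = 1 ∧ ζ * ξ = η := by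
  set g := Nat.gcd a b with hgdef
  have hg : 0 < g := Nat.gcd_pos_of_pos_left _ ha
  set A := a / g with hAdef
  set B := b / g with hBdef
  have hA : A * g = a := Nat.div_mul_cancel (Nat.gcd_dvd_left a b)
  have hB : B * g = b := Nat.div_mul_cancel (Nat.gcd_dvd_right a b)
  have hBa : B * a = Nat.lcm a b := by
    apply Nat.eq_of_mul_eq_mul_right hg
    have h1 : B * a * g = b * a := by rw [← hB]; ring
    have h2 : Nat.lcm a b * g = a * b := by
      rw [← Nat.gcd_mul_lcm a b]; ring
    rw [h1, h2]; ring
  have hAb : A * b = Nat.lcm a b := by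
    apply Nat.eq_of_mul_eq_mul_right hg
    have h1 : A * b * g = a * b := by rw [← hA]; ring
    have h2 : Nat.lcm a b * g = a * b := by
      rw [← Nat.gcd_mul_lcm a b]; ring
    rw [h1, h2]
  set u := Nat.gcdA a b with hu
  set v := Nat.gcdB a b with hv
  have key : (A : ℤ) * u + (B : ℤ) * v = 1 := by
    have hgz : (g : ℤ) ≠ 0 := by exact_mod_cast hg.ne'
    have hA' : (A : ℤ) * g = a := by exact_mod_cast hA
    have hB' : (B : ℤ) * g = b := by exact_mod_cast hB
    have hbez : (g : ℤ) = a * u + b * v := Nat.gcd_eq_gcd_ab a b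
    apply mul_left_cancel₀ hgz
    linear_combination u * hA' + v * hB' - hbez
  have hz : η ^ ((Nat.lcm a b : ℕ) : ℤ) = 1 := by rw [zpow_natCast, hη]
  refine ⟨η ^ ((v * B : ℤ)), η ^ ((u * A : ℤ)), ?_, ?_, ?_⟩
  · rw [← zpow_natCast (η ^ ((v * B : ℤ))) a, ← zpow_mul]
    have : (v * B : ℤ) * a = ((Nat.lcm a b : ℕ) : ℤ) * v := by
      rw [← hBa]; push_cast; ring
    rw [this, zpow_mul, hz, one_zpow]
  · rw [← zpow_natCast (η ^ ((u * A : ℤ))) b, ← zpow_mul]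
    have : (u * A : ℤ) * b = ((Nat.lcm a b : ℕ) : ℤ) * u := by
      rw [← hAb]; push_cast; ring
    rw [this, zpow_mul, hz, one_zpow]
  · rw [← zpow_add]
    have : v * B + u * A = 1 := by linarith [key]
    rw [this, zpow_one]

/-- Milnor–Orlik relation: `Λ_a · Λ_b = gcd(a,b) · Λ_{lcm(a,b)}` in `ℤ[ℂˣ]`. -/
theorem lambda_mul_lambda (a b : ℕ) (ha : 0 < a) (hb : 0 < b) :
    Lambda a * Lambda b = (Nat.gcd a b : ℤ) • Lambda (Nat.lcm a b) := by
  classical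
  have hg : 0 < Nat.gcd a b := Nat.gcd_pos_of_pos_left _ ha
  have hL : 0 < Nat.lcm a b := Nat.lcm_pos ha hb
  haveI : NeZero a := ⟨ha.ne'⟩
  haveI : NeZero b := ⟨hb.ne'⟩
  haveI : NeZero (Nat.lcm a b) := ⟨hL.ne'⟩
  haveI : NeZero (Nat.gcd a b) := ⟨hg.ne'⟩
  letI : Fintype (rootsOfUnity a ℂ) := Fintype.ofFinite _
  letI : Fintype (rootsOfUnity b ℂ) := Fintype.ofFinite _
  letI : Fintype (rootsOfUnity (Nat.lcm a b) ℂ) := Fintype.ofFinite _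
  letI : Fintype (rootsOfUnity (Nat.gcd a b) ℂ) := Fintype.ofFinite _
  unfold Lambda
  rw [dif_neg ha.ne', dif_neg hb.ne', dif_neg hL.ne']
  -- the multiplication map to `rootsOfUnity (lcm a b) ℂ`
  have hmem : ∀ p : rootsOfUnity a ℂ × rootsOfUnity b ℂ,
      (p.1 : ℂˣ) * (p.2 : ℂˣ) ∈ rootsOfUnity (Nat.lcm a b) ℂ := by
    intro p
    rw [mem_rootsOfUnity, mul_pow,
      pow_eq_one_of_dvd' ((mem_rootsOfUnity _ _).mp p.1.2) (Nat.dvd_lcm_left a b),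
      pow_eq_one_of_dvd' ((mem_rootsOfUnity _ _).mp p.2.2) (Nat.dvd_lcm_right a b), one_mul]
  set m : rootsOfUnity a ℂ × rootsOfUnity b ℂ → rootsOfUnity (Nat.lcm a b) ℂ :=
    fun p => ⟨(p.1 : ℂˣ) * (p.2 : ℂˣ), hmem p⟩ with hm
  have sur : ∀ η : rootsOfUnity (Nat.lcm a b) ℂ, ∃ p, m p = η := by
    intro η
    obtain ⟨ζ, ξ, hζ, hξ, hmul⟩ :=
      exists_factor a b ha hb (η : ℂˣ) ((mem_rootsOfUnity _ _).mp η.2)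
    exact ⟨(⟨ζ, (mem_rootsOfUnity _ _).mpr hζ⟩, ⟨ξ, (mem_rootsOfUnity _ _).mpr hξ⟩),
      Subtype.ext hmul⟩
  -- every fiber of `m` has exactly `gcd a b` elements
  have card_fiber : ∀ η : rootsOfUnity (Nat.lcm a b) ℂ,
      (Finset.univ.filter (fun p => m p = η)).card = Nat.gcd a b := by
    intro η
    obtain ⟨p₀, hp₀⟩ := sur η
    have hp₀' : (p₀.1 : ℂˣ) * (p₀.2 : ℂˣ) = (η : ℂˣ) := congrArg Subtype.val hp₀
    rw [← Complex.card_rootsOfUnity (Nat.gcd a b), Nat.card_eq_fintype_card, ← Finset.card_univ]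
    have hq1 : ((p₀.1 : ℂˣ)) ^ a = 1 := (mem_rootsOfUnity _ _).mp p₀.1.2
    have hq2 : ((p₀.2 : ℂˣ)) ^ b = 1 := (mem_rootsOfUnity _ _).mp p₀.2.2
    have hfil : ∀ p : rootsOfUnity a ℂ × rootsOfUnity b ℂ,
        p ∈ Finset.univ.filter (fun p => m p = η) → (p.1 : ℂˣ) * (p.2 : ℂˣ) = (η : ℂˣ) :=
      fun p hp => congrArg Subtype.val (Finset.mem_filter.mp hp).2
    refine Finset.card_bij'
      (fun p hp => (⟨(p.1 : ℂˣ) * (p₀.1 : ℂˣ)⁻¹, ?memi⟩ : rootsOfUnity (Nat.gcd a b) ℂ))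
      (fun ζ hζ => (⟨(ζ : ℂˣ) * (p₀.1 : ℂˣ), ?mem1⟩, ⟨(ζ : ℂˣ)⁻¹ * (p₀.2 : ℂˣ), ?mem2⟩))
      ?_ ?_ ?_ ?_
    case memi =>
      have heq : (p.1 : ℂˣ) * (p.2 : ℂˣ) = (p₀.1 : ℂˣ) * (p₀.2 : ℂˣ) := by
        rw [hfil p hp, hp₀']
      have hx : (p.1 : ℂˣ) * (p₀.1 : ℂˣ)⁻¹ = (p₀.2 : ℂˣ) * (p.2 : ℂˣ)⁻¹ := by
        rw [← div_eq_mul_inv, ← div_eq_mul_inv, div_eq_div_iff_mul_eq_mul, heq, mul_comm]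
      rw [mem_rootsOfUnity]
      refine pow_gcd_eq_one.mpr ⟨?_, ?_⟩
      · rw [mul_pow, inv_pow, (mem_rootsOfUnity _ _).mp p.1.2, hq1, inv_one, mul_one]
      · rw [hx, mul_pow, inv_pow, hq2, (mem_rootsOfUnity _ _).mp p.2.2, inv_one, mul_one]
    case mem1 =>
      rw [mem_rootsOfUnity, mul_pow,
        pow_eq_one_of_dvd' ((mem_rootsOfUnity _ _).mp ζ.2) (Nat.gcd_dvd_left a b), hq1, one_mul]
    case mem2 =>
      rw [mem_rootsOfUnity, mul_pow, inv_pow,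
        pow_eq_one_of_dvd' ((mem_rootsOfUnity _ _).mp ζ.2) (Nat.gcd_dvd_right a b),
        hq2, inv_one, one_mul]
    · intro p hp
      exact Finset.mem_univ _
    · intro ζ hζ
      refine Finset.mem_filter.mpr ⟨Finset.mem_univ _, Subtype.ext ?_⟩
      show ((ζ : ℂˣ) * (p₀.1 : ℂˣ)) * ((ζ : ℂˣ)⁻¹ * (p₀.2 : ℂˣ)) = (η : ℂˣ)
      rw [mul_mul_mul_comm, mul_inv_cancel, one_mul, hp₀']
    · intro p hp
      have heq : (p.1 : ℂˣ) * (p.2 : ℂˣ) = (p₀.1 : ℂˣ) * (p₀.2 : ℂˣ) := by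
        rw [hfil p hp, hp₀']
      refine Prod.ext (Subtype.ext ?_) (Subtype.ext ?_)
      · show ((p.1 : ℂˣ) * (p₀.1 : ℂˣ)⁻¹) * (p₀.1 : ℂˣ) = (p.1 : ℂˣ)
        exact inv_mul_cancel_right _ _
      · show ((p.1 : ℂˣ) * (p₀.1 : ℂˣ)⁻¹)⁻¹ * (p₀.2 : ℂˣ) = (p.2 : ℂˣ)
        rw [mul_inv_rev, inv_inv]
        apply mul_left_cancel (a := (p.1 : ℂˣ))
        calc (p.1 : ℂˣ) * ((p₀.1 : ℂˣ) * (p.1 : ℂˣ)⁻¹ * (p₀.2 : ℂˣ))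
            = ((p.1 : ℂˣ) * (p.1 : ℂˣ)⁻¹) * ((p₀.1 : ℂˣ) * (p₀.2 : ℂˣ)) := by
              rw [mul_comm (p₀.1 : ℂˣ) ((p.1 : ℂˣ)⁻¹), ← mul_assoc, ← mul_assoc, mul_assoc]
          _ = (p.1 : ℂˣ) * (p.2 : ℂˣ) := by rw [mul_inv_cancel, one_mul, heq]
    · intro ζ hζ
      refine Subtype.ext ?_
      show ((ζ : ℂˣ) * (p₀.1 : ℂˣ)) * (p₀.1 : ℂˣ)⁻¹ = (ζ : ℂˣ)
      exact mul_inv_cancel_right _ _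
  calc (∑ ζ : rootsOfUnity a ℂ, MonoidAlgebra.single (ζ : ℂˣ) (1 : ℤ)) *
        ∑ ξ : rootsOfUnity b ℂ, MonoidAlgebra.single (ξ : ℂˣ) (1 : ℤ)
      = ∑ p : rootsOfUnity a ℂ × rootsOfUnity b ℂ,
          MonoidAlgebra.single ((m p : ℂˣ)) (1 : ℤ) := by
        rw [Finset.sum_mul_sum, ← Finset.sum_product']
        simp [MonoidAlgebra.single_mul_single, hm]
    _ = ∑ η : rootsOfUnity (Nat.lcm a b) ℂ,
          ∑ p ∈ Finset.univ.filter (fun p => m p = η),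
            MonoidAlgebra.single ((η : ℂˣ)) (1 : ℤ) :=
        (Finset.sum_fiberwise' Finset.univ m
          (fun η => MonoidAlgebra.single ((η : ℂˣ)) (1 : ℤ))).symm
    _ = (Nat.gcd a b : ℤ) • ∑ η : rootsOfUnity (Nat.lcm a b) ℂ,
          MonoidAlgebra.single ((η : ℂˣ)) (1 : ℤ) := by
        rw [Finset.smul_sum]
        refine Finset.sum_congr rfl fun η _ => ?_
        rw [Finset.sum_const, card_fiber η, ← natCast_zsmul]
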